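/- In a trie, for every internal node u there is exactly one maximal even-length (possibly empty) palindromic path ending extension centered at u, and for every edge e exactly one maximal odd-length palindrome centered at e. -/

import Mathlib

variable {α : Type*}

def PrefixClosed (S : Finset (List α)) : Prop := ∀ v ∈ S, ∀ p, p <+: v → p ∈ S

def sufx (v : List α) (k : ℕ) : List α := v.drop (v.length - k)

def IsPal (P : List α) : Prop := P.reverse = P

def NoExt (S : Finset (List α)) (v : List α) (k : ℕ) : Prop :=
  ∀ a, v ++ [a] ∈ S → k + 1 ≤ v.length →
    ¬ IsPal ((v ++ [a]).drop (v.length - k - 1))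

lemma isPal_short (l : List α) (h : l.length ≤ 1) : IsPal l := by
  match l, h with
  | [], _ => rfl
  | [a], _ => rfl

lemma length_sufx (v : List α) (k : ℕ) (h : k ≤ v.length) : (sufx v k).length = k := by
  simp [sufx]; omega

lemma sufx_concat (w : List α) (a : α) (k : ℕ) (h1 : 1 ≤ k) (h2 : k ≤ w.length + 1) :
    sufx (w ++ [a]) k = sufx w (k - 1) ++ [a] := by
  unfold sufx
  rw [List.drop_append]
  have e1 : (w ++ [a]).length - k = w.length - (k - 1) := by simp; omega
  rw [e1]
  have e2 : w.length - (k - 1) - w.length = 0 := by omega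
  rw [e2]
  rfl

lemma sufx_tail (w : List α) (k : ℕ) (h1 : 1 ≤ k) (h2 : k ≤ w.length) :
    (sufx w k).tail = sufx w (k - 1) := by
  unfold sufx
  rw [List.tail_drop]
  congr 1
  omega

lemma isPal_concat_head (x : List α) (a : α) (hx : x ≠ []) (h : IsPal (x ++ [a])) :
    x.head? = some a := by
  obtain ⟨b, t, rfl⟩ := List.exists_cons_of_ne_nil hx
  unfold IsPal at h
  rw [List.reverse_append] at h
  simp at h
  simp [h.1]

lemma isPal_concat_shrink (x : List α) (a : α) (hx : x ≠ []) (h : IsPal (x ++ [a])) :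
    IsPal x.tail := by
  obtain ⟨b, t, rfl⟩ := List.exists_cons_of_ne_nil hx
  unfold IsPal at h ⊢
  rw [List.reverse_append] at h
  simp at h
  obtain ⟨h1, h2⟩ := h
  subst h1
  simpa using h2

/-- the invariant for a palindromic occurrence centered at `u` with parity shift `c` -/
def Good (S : Finset (List α)) (u : List α) (c : ℕ) (p : List α × ℕ) : Prop :=
  p.1 ∈ S ∧ u <+: p.1 ∧ p.2 = 2 * (p.1.length - u.length) + c ∧ p.2 ≤ p.1.length ∧
    IsPal (sufx p.1 p.2)

section Key

variable {S : Finset (List α)} {u : List α} {c : ℕ}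

lemma good_elim {v : List α} {k : ℕ} (h : Good S u c (v, k)) :
    v ∈ S ∧ u <+: v ∧ k = 2 * (v.length - u.length) + c ∧ k ≤ v.length ∧
      IsPal (sufx v k) := h

lemma good_intro {v : List α} {k : ℕ} (h1 : v ∈ S) (h2 : u <+: v)
    (h3 : k = 2 * (v.length - u.length) + c) (h4 : k ≤ v.length)
    (h5 : IsPal (sufx v k)) : Good S u c (v, k) := ⟨h1, h2, h3, h4, h5⟩

lemma good_step (hpc : PrefixClosed S) {v : List α} {k : ℕ} {a : α}
    (h : Good S u c (v, k)) (hm : v ++ [a] ∈ S) (hk : k + 1 ≤ v.length)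
    (hp : IsPal ((v ++ [a]).drop (v.length - k - 1))) :
    Good S u c (v ++ [a], k + 2) := by
  obtain ⟨h1, h2, h3, h4, h5⟩ := good_elim h
  have hul : u.length ≤ v.length := h2.length_le
  have hl : (v ++ [a]).length = v.length + 1 := by simp
  refine good_intro hm (h2.trans ⟨[a], rfl⟩) (by omega) (by omega) ?_
  have : sufx (v ++ [a]) (k + 2) = (v ++ [a]).drop (v.length - k - 1) := by
    unfold sufx; rw [hl]; congr 1; omega
  rwa [this]

lemma good_pred (hpc : PrefixClosed S) {v : List α} {k : ℕ}
    (h : Good S u c (v, k)) (hlt : u.length < v.length) :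
    ∃ w a, v = w ++ [a] ∧ 2 ≤ k ∧ Good S u c (w, k - 2) := by
  obtain ⟨h1, h2, h3, h4, h5⟩ := good_elim h
  rcases List.eq_nil_or_concat v with rfl | ⟨w, a, rfl⟩
  · simp at hlt
  rw [List.concat_eq_append] at *
  have hwl : (w ++ [a]).length = w.length + 1 := by simp
  rw [hwl] at h3 h4 hlt
  have hul : u.length ≤ w.length := by omega
  have hk2 : 2 ≤ k := by omega
  have hpal : IsPal (sufx w (k - 2)) := by
    have e1 : sufx (w ++ [a]) k = sufx w (k - 1) ++ [a] :=
      sufx_concat w a k (by omega) (by omega)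
    rw [e1] at h5
    have hxne : sufx w (k - 1) ≠ [] := by
      have hlen := length_sufx w (k - 1) (by omega)
      intro hc; rw [hc] at hlen; simp at hlen; omega
    have := isPal_concat_shrink _ _ hxne h5
    rwa [sufx_tail w (k - 1) (by omega) (by omega)] at this
  exact ⟨w, a, rfl, hk2,
    good_intro (hpc _ h1 w ⟨[a], rfl⟩)
      (List.prefix_of_prefix_length_le h2 ⟨[a], rfl⟩ hul)
      (by omega) (by omega) hpal⟩

lemma good_take (hpc : PrefixClosed S) :
    ∀ d (v : List α) (k n : ℕ), Good S u c (v, k) → u.length ≤ n → n ≤ v.length →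
      v.length - n = d → Good S u c (v.take n, 2 * (n - u.length) + c) := by
  intro d
  induction d with
  | zero =>
    intro v k n h hn1 hn2 hd
    have h3 : k = 2 * (v.length - u.length) + c := (good_elim h).2.2.1
    have hn : n = v.length := by omega
    subst hn
    have e : v.take v.length = v := by simp
    rw [e, show 2 * (v.length - u.length) + c = k from by omega]
    exact h
  | succ d ih =>
    intro v k n h hn1 hn2 hd
    have hlt : u.length < v.length := by omega
    obtain ⟨w, a, rfl, hk2, hg⟩ := good_pred hpc h hlt
    have hwl : (w ++ [a]).length = w.length + 1 := by simp
    have e : (w ++ [a]).take n = w.take n := List.take_append_of_le_length (by omega)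
    rw [e]
    exact ih w (k - 2) n hg hn1 (by omega) (by omega)

lemma good_unique_of_length (hpc : PrefixClosed S) :
    ∀ d (v v' : List α) (k k' : ℕ), Good S u c (v, k) → Good S u c (v', k') →
      v.length = v'.length → v.length - u.length = d → v = v' ∧ k = k' := by
  intro d
  induction d with
  | zero =>
    intro v v' k k' hp hq hlen hd
    have h3 : k = 2 * (v.length - u.length) + c := (good_elim hp).2.2.1
    have h3' : k' = 2 * (v'.length - u.length) + c := (good_elim hq).2.2.1
    have hl1 : u.length ≤ v.length := (good_elim hp).2.1.length_le
    have h1 : v = u := ((good_elim hp).2.1.eq_of_length (by omega)).symm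
    have h2 : v' = u := ((good_elim hq).2.1.eq_of_length (by omega)).symm
    exact ⟨h1.trans h2.symm, by omega⟩
  | succ d ih =>
    intro v v' k k' hp hq hlen hd
    have hl1 : u.length ≤ v.length := (good_elim hp).2.1.length_le
    have hlt : u.length < v.length := by omega
    have hlt' : u.length < v'.length := by omega
    obtain ⟨w, a, rfl, hk2, hg⟩ := good_pred hpc hp hlt
    obtain ⟨w', b, rfl, hk2', hg'⟩ := good_pred hpc hq hlt'
    have hwl : (w ++ [a]).length = w.length + 1 := by simp
    have hwl' : (w' ++ [b]).length = w'.length + 1 := by simp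
    have hww : w = w' ∧ k - 2 = k' - 2 :=
      ih w w' (k - 2) (k' - 2) hg hg' (by omega) (by omega)
    obtain ⟨rfl, -⟩ := hww
    have h3 : k = 2 * ((w ++ [a]).length - u.length) + c := (good_elim hp).2.2.1
    have h3' : k' = 2 * ((w ++ [b]).length - u.length) + c := (good_elim hq).2.2.1
    have hkk : k = k' := by rw [hwl] at h3; rw [hwl'] at h3'; omega
    subst hkk
    have h4 : k ≤ (w ++ [a]).length := (good_elim hp).2.2.2.1
    rw [hwl] at h4
    have hul : u.length ≤ w.length := by omega
    have e1 : sufx (w ++ [a]) k = sufx w (k - 1) ++ [a] :=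
      sufx_concat w a k (by omega) (by omega)
    have e2 : sufx (w ++ [b]) k = sufx w (k - 1) ++ [b] :=
      sufx_concat w b k (by omega) (by omega)
    have hxne : sufx w (k - 1) ≠ [] := by
      have hlen' := length_sufx w (k - 1) (by omega)
      intro hcon; rw [hcon] at hlen'; simp at hlen'; omega
    have ha := isPal_concat_head _ _ hxne (e1 ▸ (good_elim hp).2.2.2.2)
    have hb := isPal_concat_head _ _ hxne (e2 ▸ (good_elim hq).2.2.2.2)
    have hab : a = b := by rw [ha] at hb; exact Option.some.inj hb
    subst hab
    exact ⟨rfl, rfl⟩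

lemma good_exists_max (hpc : PrefixClosed S) :
    ∀ d (v : List α) (k : ℕ), Good S u c (v, k) → S.sup List.length - v.length ≤ d →
      ∃ p, Good S u c p ∧ NoExt S p.1 p.2 := by
  intro d
  induction d with
  | zero =>
    intro v k h hd
    have hne : NoExt S v k := by
      intro a hm hk hpal
      have hs : (v ++ [a]).length ≤ S.sup List.length := Finset.le_sup hm
      rw [show (v ++ [a]).length = v.length + 1 from by simp] at hs
      omega
    exact ⟨(v, k), h, hne⟩
  | succ d ih =>
    intro v k h hd
    by_cases hne : NoExt S v k
    · exact ⟨(v, k), h, hne⟩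
    · unfold NoExt at hne
      push_neg at hne
      obtain ⟨a, hm, hk, hpal⟩ := hne
      have hg := good_step hpc h hm hk hpal
      have hle : (v ++ [a]).length ≤ S.sup List.length := Finset.le_sup hm
      simp at hle
      refine ih (v ++ [a]) (k + 2) hg ?_
      have : (v ++ [a]).length = v.length + 1 := by simp
      omega

lemma good_max_unique (hpc : PrefixClosed S) {p q : List α × ℕ}
    (hp : Good S u c p) (hpn : NoExt S p.1 p.2)
    (hq : Good S u c q) (hqn : NoExt S q.1 q.2)
    (hle : p.1.length ≤ q.1.length) : p = q := by
  obtain ⟨v, k⟩ := p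
  obtain ⟨v', k'⟩ := q
  simp only at hpn hqn hle ⊢
  have hul : u.length ≤ v.length := (good_elim hp).2.1.length_le
  have hul' : u.length ≤ v'.length := (good_elim hq).2.1.length_le
  rcases eq_or_lt_of_le hle with heq | hlt
  · obtain ⟨rfl, rfl⟩ := good_unique_of_length hpc (v.length - u.length) v v' k k' hp hq heq rfl
    rfl
  · exfalso
    have h3 : k = 2 * (v.length - u.length) + c := (good_elim hp).2.2.1
    have g0 : Good S u c (v'.take v.length, 2 * (v.length - u.length) + c) :=
      good_take hpc (v'.length - v.length) v' k' v.length hq (by omega) (by omega) rfl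
    have hlen0 : (v'.take v.length).length = v.length := by simp; omega
    have hpe : v'.take v.length = v ∧ 2 * (v.length - u.length) + c = k :=
      good_unique_of_length hpc ((v'.take v.length).length - u.length) _ v _ k g0 hp hlen0 rfl
    have g1 : Good S u c (v'.take (v.length + 1), 2 * (v.length + 1 - u.length) + c) :=
      good_take hpc (v'.length - (v.length + 1)) v' k' (v.length + 1) hq (by omega)
        (by omega) rfl
    have e : v'.take (v.length + 1) = v ++ [v'[v.length]] := by
      rw [← List.take_concat_get hlt, hpe.1]
      simp
    rw [e, show 2 * (v.length + 1 - u.length) + c = k + 2 from by omega] at g1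
    have hmem : v ++ [v'[v.length]] ∈ S := (good_elim g1).1
    have hk4 : k + 2 ≤ (v ++ [v'[v.length]]).length := (good_elim g1).2.2.2.1
    have hvl : (v ++ [v'[v.length]]).length = v.length + 1 := by simp
    apply hpn v'[v.length] hmem (by omega)
    have eq2 : sufx (v ++ [v'[v.length]]) (k + 2)
        = (v ++ [v'[v.length]]).drop (v.length - k - 1) := by
      unfold sufx; rw [hvl]; congr 1; omega
    rw [← eq2]
    exact (good_elim g1).2.2.2.2

lemma key (S : Finset (List α)) (hpc : PrefixClosed S) (u : List α) (hu : u ∈ S)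
    (c : ℕ) (hc : c ≤ u.length) (hpal : IsPal (sufx u c)) :
    ∃! p : List α × ℕ, p.1 ∈ S ∧ u <+: p.1 ∧
      p.2 = 2 * (p.1.length - u.length) + c ∧ p.2 ≤ p.1.length ∧
      IsPal (sufx p.1 p.2) ∧ NoExt S p.1 p.2 := by
  have hbase : Good S u c (u, c) := good_intro hu (List.prefix_refl u) (by omega) hc hpal
  obtain ⟨p, hp, hpn⟩ := good_exists_max hpc (S.sup List.length - u.length) u c hbase le_rfl
  refine ⟨p, ⟨hp.1, hp.2.1, hp.2.2.1, hp.2.2.2.1, hp.2.2.2.2, hpn⟩, ?_⟩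
  rintro q ⟨q1, q2, q3, q4, q5, q6⟩
  have hq : Good S u c q := ⟨q1, q2, q3, q4, q5⟩
  rcases le_total q.1.length p.1.length with h | h
  · exact good_max_unique hpc hq q6 hp hpn h
  · exact (good_max_unique hpc hp hpn hq q6 h).symm

end Key

/-- In a trie, for every internal node `u` there is exactly one maximal
even-length (possibly empty) palindrome centered at `u` (an occurrence `(v,k)`
with `u` an ancestor of `v` at half-depth: `k = 2(|v| - |u|)`), and for every
edge (identified with its lower endpoint `w ≠ root`) exactly one maximal
odd-length palindrome centered at that edge (`k = 2(|v| - |w|) + 1`). -/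
theorem unique_maximal_palindrome_per_center (S : Finset (List α))
    (hroot : ([] : List α) ∈ S) (hpc : PrefixClosed S) :
    (∀ u ∈ S, (∃ a, u ++ [a] ∈ S) →
      ∃! p : List α × ℕ, p.1 ∈ S ∧ u <+: p.1 ∧
        p.2 = 2 * (p.1.length - u.length) ∧ p.2 ≤ p.1.length ∧
        IsPal (sufx p.1 p.2) ∧ NoExt S p.1 p.2) ∧
    (∀ w ∈ S, w ≠ [] →
      ∃! p : List α × ℕ, p.1 ∈ S ∧ w <+: p.1 ∧
        p.2 = 2 * (p.1.length - w.length) + 1 ∧ p.2 ≤ p.1.length ∧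
        IsPal (sufx p.1 p.2) ∧ NoExt S p.1 p.2) := by
  constructor
  · intro u hu _
    have h0 : IsPal (sufx u 0) := isPal_short _ (by simp [sufx])
    exact key S hpc u hu 0 (Nat.zero_le _) h0
  · intro w hw hne
    have hl : 1 ≤ w.length := List.length_pos_iff.mpr hne
    have h1 : IsPal (sufx w 1) := isPal_short _ (by simp [sufx]; omega)
    exact key S hpc w hw 1 hl h1
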